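/- The square of an infinite isodyne topological space is resolvable, i.e. can be partitioned into two disjoint dense subsets. -/
import Mathlib


open Cardinal Set

private lemma stmt2_aux (X : Type*) [TopologicalSpace X] [Infinite X]
    (hiso : ∀ U : Set X, IsOpen U → U.Nonempty → #U = #X)
    (e : X ≃ (#X).ord.ToType) (U : Set X) (hU : IsOpen U) (hne : U.Nonempty)
    (i : (#X).ord.ToType) : ∃ x ∈ U, i < e x := by
  by_contra h
  push_neg at h
  have hsub : U ⊆ e ⁻¹' (Set.Iic i) := fun x hx => h x hx
  have h1 : #U ≤ #(Set.Iic i) :=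
    le_trans (Cardinal.mk_le_mk_of_subset hsub) (Cardinal.mk_preimage_of_injective _ _ e.injective)
  have h2 : #(Set.Iic i) < #X := by
    have : (Set.Iic i) ⊆ insert i (Set.Iio i) := by
      intro x hx
      rcases (Set.mem_Iic.mp hx).lt_or_eq with h' | h'
      · exact Set.mem_insert_of_mem _ h'
      · exact h' ▸ Set.mem_insert _ _
    calc #(Set.Iic i) ≤ #(insert i (Set.Iio i) : Set _) := Cardinal.mk_le_mk_of_subset this
      _ ≤ #(Set.Iio i) + 1 := Cardinal.mk_insert_le
      _ < #X := Cardinal.add_lt_of_lt (Cardinal.infinite_iff.mp ‹Infinite X›)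
            (Cardinal.mk_Iio_ord_toType i) (lt_of_lt_of_le Cardinal.one_lt_aleph0
              (Cardinal.infinite_iff.mp ‹Infinite X›))
  rw [hiso U hU hne] at h1
  exact absurd h1 (not_le_of_gt h2)

/-- The square of an infinite isodyne space is resolvable: `X × X`
is the disjoint union of two dense subsets. -/
theorem stmt2 (X : Type*) [TopologicalSpace X] [Infinite X]
    (hiso : ∀ U : Set X, IsOpen U → U.Nonempty → #U = #X) :
    ∃ D₁ D₂ : Set (X × X), Dense D₁ ∧ Dense D₂ ∧ Disjoint D₁ D₂ ∧ D₁ ∪ D₂ = Set.univ := by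
  obtain ⟨e⟩ := Cardinal.eq.mp (Cardinal.mk_ord_toType #X).symm
  refine ⟨{p | e p.1 < e p.2}, {p | ¬ e p.1 < e p.2}, ?_, ?_, ?_, ?_⟩
  · rw [dense_iff_inter_open]
    rintro W hW ⟨⟨a, b⟩, hab⟩
    obtain ⟨U, V, hU, hV, ha, hb, hUV⟩ := isOpen_prod_iff.mp hW a b hab
    obtain ⟨y, hy, hxy⟩ := stmt2_aux X hiso e V hV ⟨b, hb⟩ (e a)
    exact ⟨(a, y), hUV (Set.mk_mem_prod ha hy), hxy⟩
  · rw [dense_iff_inter_open]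
    rintro W hW ⟨⟨a, b⟩, hab⟩
    obtain ⟨U, V, hU, hV, ha, hb, hUV⟩ := isOpen_prod_iff.mp hW a b hab
    obtain ⟨x, hx, hxy⟩ := stmt2_aux X hiso e U hU ⟨a, ha⟩ (e b)
    exact ⟨(x, b), hUV (Set.mk_mem_prod hx hb), not_lt_of_gt hxy⟩
  · exact Set.disjoint_left.mpr fun p hp hp' => hp' hp
  · ext p; simp [em]; exact lt_or_ge _ _
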